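/- arXiv:2101.02967 — 3 statements merged into one kernel-verified Lean document; each statement's English description precedes it below -/
import Mathlib

section
/- With the vectors c(H₃) = c(H₊) = c(H₋) = 0, c(F₃) = −(1/√2)·ξ_{1,0}, c(F₊) = ξ_{1,1}, c(F₋) = −ξ_{1,−1} in D, one has ⟨c(X*), c(Y)⟩ = ⟨c(Y*), c(X)⟩ for all X, Y in the generating set {H₃, H₊, H₋, F₃, F₊, F₋}, where the involution * fixes H₃ and F₃ and exchanges H₊ ↔ H₋ and F₊ ↔ F₋. Consequently, the unique linear functional ψ in the Schürmann triple (ρ₁₀, c, ψ) determined by ψ([X,Y]) = ⟨c(Y*), c(X)⟩ − ⟨c(X*), c(Y)⟩ vanishes identically on so(3,1). -/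
noncomputable section

/-- The index set `S = {(ℓ,m) : 1 ≤ ℓ, |m| ≤ ℓ}` of the orthonormal basis of `D`. -/
abbrev inS (p : ℤ × ℤ) : Prop := 1 ≤ p.1 ∧ |p.2| ≤ p.1

/-- The ambient space of finitely supported families; the representation space `D`
is the subspace of families supported in `S`. -/
abbrev V := (ℤ × ℤ) →₀ ℂ

/-- The basis vector `ξ_{ℓ,m}`, with the convention `ξ_{ℓ,m} = 0` for `(ℓ,m) ∉ S`. -/
def ξ (ℓ m : ℤ) : V := if inS (ℓ, m) then Finsupp.single (ℓ, m) 1 else 0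

/-- `C ℓ = i √(ℓ²-1) / √(4ℓ²-1)`. -/
def C (ℓ : ℤ) : ℂ := Complex.I * (Real.sqrt ((ℓ : ℝ) ^ 2 - 1) / Real.sqrt (4 * (ℓ : ℝ) ^ 2 - 1))

/-- Real square root of an integer, viewed as a complex number. -/
def csqrt (a : ℤ) : ℂ := ((Real.sqrt (a : ℝ) : ℝ) : ℂ)

/-- Build a linear operator on `V` from its values on the basis vectors `ξ_{ℓ,m}`,
`(ℓ,m) ∈ S` (and `0` on basis vectors outside `S`). -/
def mkOp (f : ℤ → ℤ → V) : V →ₗ[ℂ] V :=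
  Finsupp.lsum ℂ fun p => LinearMap.toSpanSingleton ℂ V (if inS p then f p.1 p.2 else 0)

/-- `ρ(H₃) ξ_{ℓ,m} = m ξ_{ℓ,m}`. -/
def rhoH3 : V →ₗ[ℂ] V := mkOp fun ℓ m => (m : ℂ) • ξ ℓ m

/-- `ρ(H₊) ξ_{ℓ,m} = √((ℓ-m)(ℓ+m+1)) ξ_{ℓ,m+1}`. -/
def rhoHp : V →ₗ[ℂ] V := mkOp fun ℓ m => csqrt ((ℓ - m) * (ℓ + m + 1)) • ξ ℓ (m + 1)

/-- `ρ(H₋) ξ_{ℓ,m} = √((ℓ+m)(ℓ-m+1)) ξ_{ℓ,m-1}`. -/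
def rhoHm : V →ₗ[ℂ] V := mkOp fun ℓ m => csqrt ((ℓ + m) * (ℓ - m + 1)) • ξ ℓ (m - 1)

/-- `ρ(F₃) ξ_{ℓ,m} = C_ℓ √(ℓ²-m²) ξ_{ℓ-1,m} - C_{ℓ+1} √((ℓ+1)²-m²) ξ_{ℓ+1,m}`. -/
def rhoF3 : V →ₗ[ℂ] V := mkOp fun ℓ m =>
  (C ℓ * csqrt (ℓ ^ 2 - m ^ 2)) • ξ (ℓ - 1) m
    - (C (ℓ + 1) * csqrt ((ℓ + 1) ^ 2 - m ^ 2)) • ξ (ℓ + 1) m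

/-- `ρ(F₊) ξ_{ℓ,m} = C_ℓ √((ℓ-m)(ℓ-m-1)) ξ_{ℓ-1,m+1} + C_{ℓ+1} √((ℓ+m+1)(ℓ+m+2)) ξ_{ℓ+1,m+1}`. -/
def rhoFp : V →ₗ[ℂ] V := mkOp fun ℓ m =>
  (C ℓ * csqrt ((ℓ - m) * (ℓ - m - 1))) • ξ (ℓ - 1) (m + 1)
    + (C (ℓ + 1) * csqrt ((ℓ + m + 1) * (ℓ + m + 2))) • ξ (ℓ + 1) (m + 1)

/-- `ρ(F₋) ξ_{ℓ,m} = -C_ℓ √((ℓ+m)(ℓ+m-1)) ξ_{ℓ-1,m-1} - C_{ℓ+1} √((ℓ-m+1)(ℓ-m+2)) ξ_{ℓ+1,m-1}`. -/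
def rhoFm : V →ₗ[ℂ] V := mkOp fun ℓ m =>
  -((C ℓ * csqrt ((ℓ + m) * (ℓ + m - 1))) • ξ (ℓ - 1) (m - 1))
    - (C (ℓ + 1) * csqrt ((ℓ - m + 1) * (ℓ - m + 2))) • ξ (ℓ + 1) (m - 1)

/-- The inner product on `D` making `(ξ_{ℓ,m})` orthonormal. -/
def inn (φ ψ : V) : ℂ := ∑' p : ℤ × ℤ, (starRingEnd ℂ) (φ p) * ψ p

/-- The six generators `H₃, H₊, H₋, F₃, F₊, F₋` of `so(3,1)`. -/
inductive Gen : Type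
  | H3 | Hp | Hm | F3 | Fp | Fm
  deriving DecidableEq

instance : Fintype Gen where
  elems := {Gen.H3, Gen.Hp, Gen.Hm, Gen.F3, Gen.Fp, Gen.Fm}
  complete := fun x => by cases x <;> simp

open Gen

/-- The involution: `H₃* = H₃`, `F₃* = F₃`, `H₊* = H₋`, `F₊* = F₋`. -/
def starGen : Gen → Gen
  | H3 => H3
  | Hp => Hm
  | Hm => Hp
  | F3 => F3
  | Fp => Fm
  | Fm => Fp

/-- The cocycle `c` on the generators. -/
def cvec : Gen → V
  | H3 => 0
  | Hp => 0
  | Hm => 0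
  | F3 => -(((Real.sqrt 2 : ℝ) : ℂ))⁻¹ • ξ 1 0
  | Fp => ξ 1 1
  | Fm => -ξ 1 (-1)

/-- Indicator basis functional on generators. -/
def eGen (W : Gen) : Gen → ℂ := fun Z => if Z = W then 1 else 0

/-- The structure constants of `so(3,1)` in the basis `H₃, H₊, H₋, F₃, F₊, F₋`:
`brk X Y Z` is the coefficient of `Z` in `[X,Y]`. -/
def brk : Gen → Gen → Gen → ℂ
  | Hp, Hm => (2 : ℂ) • eGen H3
  | Hm, Hp => (-2 : ℂ) • eGen H3
  | Fp, Fm => (-2 : ℂ) • eGen H3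
  | Fm, Fp => (2 : ℂ) • eGen H3
  | H3, Hp => eGen Hp
  | Hp, H3 => -eGen Hp
  | H3, Hm => -eGen Hm
  | Hm, H3 => eGen Hm
  | F3, Fp => -eGen Hp
  | Fp, F3 => eGen Hp
  | F3, Fm => eGen Hm
  | Fm, F3 => -eGen Hm
  | H3, Fp => eGen Fp
  | Fp, H3 => -eGen Fp
  | H3, Fm => -eGen Fm
  | Fm, H3 => eGen Fm
  | F3, Hp => eGen Fp
  | Hp, F3 => -eGen Fp
  | F3, Hm => -eGen Fm
  | Hm, F3 => eGen Fm
  | Hp, Fm => eGen F3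
  | Fm, Hp => -eGen F3
  | Hm, Fp => -eGen F3
  | Fp, Hm => eGen F3
  | _, _ => 0

lemma inn_zero_left (w : V) : inn 0 w = 0 := by
  simp [inn]

lemma inn_single_left (p : ℤ × ℤ) (a : ℂ) (w : V) :
    inn (Finsupp.single p a) w = (starRingEnd ℂ) a * w p := by
  unfold inn
  rw [tsum_eq_single p]
  · simp
  · intro q hq
    simp [Finsupp.single_apply, Ne.symm hq]

lemma inn_neg_left (φ w : V) : inn (-φ) w = -inn φ w := by
  unfold inn
  rw [← tsum_neg]
  congr 1
  ext p
  simp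

lemma cF3 : cvec F3 = Finsupp.single ((1 : ℤ), (0 : ℤ)) (-(((Real.sqrt 2 : ℝ) : ℂ))⁻¹) := by
  have h : inS ((1 : ℤ), (0 : ℤ)) := by constructor <;> simp
  simp [cvec, ξ, h, Finsupp.smul_single]

lemma cFp : cvec Fp = Finsupp.single ((1 : ℤ), (1 : ℤ)) 1 := by
  have h : inS ((1 : ℤ), (1 : ℤ)) := by constructor <;> simp
  simp [cvec, ξ, h]

lemma cFm : cvec Fm = Finsupp.single ((1 : ℤ), (-1 : ℤ)) (-1) := by
  have h : inS ((1 : ℤ), (-1 : ℤ)) := by constructor <;> simp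
  rw [cvec, ξ, if_pos h, ← Finsupp.single_neg]

lemma inn_symm (X Y : Gen) :
    inn (cvec (starGen X)) (cvec Y) = inn (cvec (starGen Y)) (cvec X) := by
  have cH3 : cvec H3 = 0 := rfl
  have cHp : cvec Hp = 0 := rfl
  have cHm : cvec Hm = 0 := rfl
  cases X <;> cases Y <;>
    simp [starGen, cH3, cHp, cHm, cF3, cFp, cFm, inn_zero_left, inn_single_left,
      inn_neg_left, Finsupp.single_apply, Prod.ext_iff, Complex.conj_ofReal, map_inv₀]

/-- With the cocycle `c` as above, `⟨c(X*), c(Y)⟩ = ⟨c(Y*), c(X)⟩` for all generators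
`X, Y`; consequently, the unique linear functional `ψ` of the Schürmann triple
`(ρ₁₀, c, ψ)`, determined on brackets by `ψ([X,Y]) = ⟨c(Y*), c(X)⟩ - ⟨c(X*), c(Y)⟩`,
vanishes identically on `so(3,1)`. -/
theorem psi_vanishes :
    (∀ X Y : Gen, inn (cvec (starGen X)) (cvec Y) = inn (cvec (starGen Y)) (cvec X)) ∧
    (∀ ψ : Gen → ℂ,
      (∀ X Y : Gen, ∑ Z : Gen, brk X Y Z * ψ Z
          = inn (cvec (starGen Y)) (cvec X) - inn (cvec (starGen X)) (cvec Y)) →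
      ∀ Z : Gen, ψ Z = 0) := by
  refine ⟨inn_symm, fun ψ h Z => ?_⟩
  have key : ∀ X Y : Gen, ∑ W : Gen, brk X Y W * ψ W = 0 := fun X Y => by
    rw [h X Y, inn_symm X Y, sub_self]
  cases Z
  · have := key Hp Hm
    simpa [brk, eGen, mul_ite, ite_mul, Finset.sum_ite_eq', mul_comm] using this
  · have := key H3 Hp
    simpa [brk, eGen, mul_ite, ite_mul, Finset.sum_ite_eq', mul_comm] using this
  · have := key Hm H3
    simpa [brk, eGen, mul_ite, ite_mul, Finset.sum_ite_eq', mul_comm] using this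
  · have := key Hp Fm
    simpa [brk, eGen, mul_ite, ite_mul, Finset.sum_ite_eq', mul_comm] using this
  · have := key H3 Fp
    simpa [brk, eGen, mul_ite, ite_mul, Finset.sum_ite_eq', mul_comm] using this
  · have := key Fm H3
    simpa [brk, eGen, mul_ite, ite_mul, Finset.sum_ite_eq', mul_comm] using this

end
end

section
/- The Casimir element J₂ acts as zero in the representation ρ₁₀: as an operator identity on D, ρ(H₊)ρ(F₋) + ρ(H₋)ρ(F₊) + ρ(F₊)ρ(H₋) + ρ(F₋)ρ(H₊) + 4·ρ(F₃)ρ(H₃) = 0. -/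
noncomputable section

lemma mkOp_single (f : ℤ → ℤ → V) (p : ℤ × ℤ) :
    mkOp f (Finsupp.single p 1) = if inS p then f p.1 p.2 else 0 := by
  simp [mkOp]
lemma mkOp_ξ (f : ℤ → ℤ → V) (ℓ m : ℤ) :
    mkOp f (ξ ℓ m) = if inS (ℓ, m) then f ℓ m else 0 := by
  unfold ξ; split_ifs with h <;> simp [mkOp_single, h]
lemma C_one : C 1 = 0 := by simp [C]
lemma csqrt_zero : csqrt 0 = 0 := by simp [csqrt]

-- zero coefficient helper: show (c * csqrt a) • ξ ℓ m = 0 when a = 0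
lemma ξ_not (ℓ m : ℤ) (h : ¬ inS (ℓ, m)) : ξ ℓ m = 0 := by simp [ξ, h]


lemma rhoH3_ξ (ℓ m : ℤ) : rhoH3 (ξ ℓ m) = (m : ℂ) • ξ ℓ m := by
  rw [rhoH3, mkOp_ξ]; split_ifs with h
  · rfl
  · rw [ξ_not _ _ h, smul_zero]

lemma rhoHp_ξ (ℓ m : ℤ) : rhoHp (ξ ℓ m) = csqrt ((ℓ - m) * (ℓ + m + 1)) • ξ ℓ (m + 1) := by
  rw [rhoHp, mkOp_ξ]; split_ifs with h
  · rfl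
  · by_cases h2 : inS (ℓ, m + 1)
    · have : ℓ + m + 1 = 0 := by
        simp only [inS, abs_le, not_and, not_le] at h h2; omega
      rw [show (ℓ - m) * (ℓ + m + 1) = 0 by rw [this, mul_zero], csqrt_zero, zero_smul]
    · rw [ξ_not _ _ h2, smul_zero]

lemma rhoHm_ξ (ℓ m : ℤ) : rhoHm (ξ ℓ m) = csqrt ((ℓ + m) * (ℓ - m + 1)) • ξ ℓ (m - 1) := by
  rw [rhoHm, mkOp_ξ]; split_ifs with h
  · rfl
  · by_cases h2 : inS (ℓ, m - 1)
    · have : ℓ - m + 1 = 0 := by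
        simp only [inS, abs_le, not_and, not_le] at h h2; omega
      rw [show (ℓ + m) * (ℓ - m + 1) = 0 by rw [this, mul_zero], csqrt_zero, zero_smul]
    · rw [ξ_not _ _ h2, smul_zero]

lemma rhoF3_ξ (ℓ m : ℤ) : rhoF3 (ξ ℓ m) =
    (C ℓ * csqrt (ℓ ^ 2 - m ^ 2)) • ξ (ℓ - 1) m
      - (C (ℓ + 1) * csqrt ((ℓ + 1) ^ 2 - m ^ 2)) • ξ (ℓ + 1) m := by
  rw [rhoF3, mkOp_ξ]; split_ifs with h
  · rfl
  · symm
    by_cases h1 : inS (ℓ - 1, m)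
    · exfalso; simp only [inS, abs_le, not_and, not_le] at h h1; omega
    rw [ξ_not _ _ h1, smul_zero, zero_sub, neg_eq_zero]
    by_cases h2 : inS (ℓ + 1, m)
    · simp only [inS, abs_le, not_and, not_le] at h h2
      rcases (by omega : ℓ = 0 ∨ m = ℓ + 1 ∨ m = -(ℓ + 1)) with h0 | h0 | h0
      · subst h0; norm_num [C_one]
      · subst h0; rw [show (ℓ + 1) ^ 2 - (ℓ + 1) ^ 2 = 0 by ring, csqrt_zero, mul_zero, zero_smul]
      · subst h0; rw [show (ℓ + 1) ^ 2 - (-(ℓ + 1)) ^ 2 = 0 by ring, csqrt_zero, mul_zero, zero_smul]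
    · rw [ξ_not _ _ h2, smul_zero]

lemma rhoFp_ξ (ℓ m : ℤ) : rhoFp (ξ ℓ m) =
    (C ℓ * csqrt ((ℓ - m) * (ℓ - m - 1))) • ξ (ℓ - 1) (m + 1)
      + (C (ℓ + 1) * csqrt ((ℓ + m + 1) * (ℓ + m + 2))) • ξ (ℓ + 1) (m + 1) := by
  rw [rhoFp, mkOp_ξ]; split_ifs with h
  · rfl
  · symm
    by_cases h1 : inS (ℓ - 1, m + 1)
    · exfalso; simp only [inS, abs_le, not_and, not_le] at h h1; omega
    rw [ξ_not _ _ h1, smul_zero, zero_add]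
    by_cases h2 : inS (ℓ + 1, m + 1)
    · simp only [inS, abs_le, not_and, not_le] at h h2
      rcases (by omega : ℓ = 0 ∨ ℓ + m + 1 = 0 ∨ ℓ + m + 2 = 0) with h0 | h0 | h0
      · subst h0; norm_num [C_one]
      · rw [show (ℓ + m + 1) * (ℓ + m + 2) = 0 by rw [h0]; ring, csqrt_zero, mul_zero, zero_smul]
      · rw [show (ℓ + m + 1) * (ℓ + m + 2) = 0 by rw [h0]; ring, csqrt_zero, mul_zero, zero_smul]
    · rw [ξ_not _ _ h2, smul_zero]

lemma rhoFm_ξ (ℓ m : ℤ) : rhoFm (ξ ℓ m) =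
    -((C ℓ * csqrt ((ℓ + m) * (ℓ + m - 1))) • ξ (ℓ - 1) (m - 1))
      - (C (ℓ + 1) * csqrt ((ℓ - m + 1) * (ℓ - m + 2))) • ξ (ℓ + 1) (m - 1) := by
  rw [rhoFm, mkOp_ξ]; split_ifs with h
  · rfl
  · symm
    by_cases h1 : inS (ℓ - 1, m - 1)
    · exfalso; simp only [inS, abs_le, not_and, not_le] at h h1; omega
    rw [ξ_not _ _ h1, smul_zero, neg_zero, zero_sub, neg_eq_zero]
    by_cases h2 : inS (ℓ + 1, m - 1)
    · simp only [inS, abs_le, not_and, not_le] at h h2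
      rcases (by omega : ℓ = 0 ∨ ℓ - m + 1 = 0 ∨ ℓ - m + 2 = 0) with h0 | h0 | h0
      · subst h0; norm_num [C_one]
      · rw [show (ℓ - m + 1) * (ℓ - m + 2) = 0 by rw [h0]; ring, csqrt_zero, mul_zero, zero_smul]
      · rw [show (ℓ - m + 1) * (ℓ - m + 2) = 0 by rw [h0]; ring, csqrt_zero, mul_zero, zero_smul]
    · rw [ξ_not _ _ h2, smul_zero]


lemma csqrt_mul (a b : ℤ) (ha : 0 ≤ a) : csqrt (a * b) = csqrt a * csqrt b := by
  simp only [csqrt, Int.cast_mul]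
  rw [Real.sqrt_mul (by exact_mod_cast ha)]
  push_cast; ring

lemma csqrt_sq (a : ℤ) (ha : 0 ≤ a) : csqrt a * csqrt a = (a : ℂ) := by
  simp only [csqrt]
  rw [← Complex.ofReal_mul, Real.mul_self_sqrt (by exact_mod_cast ha)]
  norm_cast


/-- The Casimir element `J₂ = H₊F₋ + H₋F₊ + F₊H₋ + F₋H₊ + 4F₃H₃` acts as zero in the
representation `ρ₁₀` (corresponding to the scalar `i ℓ₀ ℓ₁` with `ℓ₀ = 1, ℓ₁ = 0`). -/
theorem casimir_J2_acts_as_zero :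
    rhoHp ∘ₗ rhoFm + rhoHm ∘ₗ rhoFp + rhoFp ∘ₗ rhoHm + rhoFm ∘ₗ rhoHp
      + (4 : ℂ) • (rhoF3 ∘ₗ rhoH3) = 0 := by
  apply Finsupp.lhom_ext
  rintro ⟨ℓ, m⟩ c
  rw [show (Finsupp.single ((ℓ, m) : ℤ × ℤ) c : V) = c • Finsupp.single ((ℓ, m) : ℤ × ℤ) 1 by
    rw [Finsupp.smul_single, smul_eq_mul, mul_one]]
  rw [map_smul, map_smul]
  by_cases h : inS (ℓ, m)
  · have hξ : (Finsupp.single ((ℓ, m) : ℤ × ℤ) (1 : ℂ) : V) = ξ ℓ m := by rw [ξ, if_pos h]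
    rw [hξ]
    obtain ⟨hl, hm⟩ := h
    rw [abs_le] at hm
    simp only at hl hm
    have e1 : ∀ b, csqrt ((ℓ + m) * b) = csqrt (ℓ + m) * csqrt b :=
      fun b => csqrt_mul _ b (by omega)
    have e2 : ∀ b, csqrt ((ℓ - m) * b) = csqrt (ℓ - m) * csqrt b :=
      fun b => csqrt_mul _ b (by omega)
    have e3 : ∀ b, csqrt ((ℓ + m + 1) * b) = csqrt (ℓ + m + 1) * csqrt b :=
      fun b => csqrt_mul _ b (by omega)
    have e4 : ∀ b, csqrt ((ℓ - m + 1) * b) = csqrt (ℓ - m + 1) * csqrt b :=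
      fun b => csqrt_mul _ b (by omega)
    have e5 : ∀ b, csqrt ((ℓ + m + 2) * b) = csqrt (ℓ + m + 2) * csqrt b :=
      fun b => csqrt_mul _ b (by omega)
    have e6 : ∀ b, csqrt ((ℓ - m + 2) * b) = csqrt (ℓ - m + 2) * csqrt b :=
      fun b => csqrt_mul _ b (by omega)
    simp only [LinearMap.add_apply, LinearMap.comp_apply, LinearMap.smul_apply,
      LinearMap.zero_apply, rhoH3_ξ, rhoHp_ξ, rhoHm_ξ, rhoF3_ξ, rhoFp_ξ, rhoFm_ξ,
      map_add, map_sub, map_neg, map_smul, smul_smul, smul_add, smul_sub, smul_neg,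
      smul_zero,
      show m - 1 + 1 = m by ring, show m + 1 - 1 = m by ring,
      show (ℓ - 1 - (m - 1)) * (ℓ - 1 + (m - 1) + 1) = (ℓ - m) * (ℓ + m - 1) by ring,
      show (ℓ + 1 - (m - 1)) * (ℓ + 1 + (m - 1) + 1) = (ℓ - m + 2) * (ℓ + m + 1) by ring,
      show (ℓ - 1 + (m + 1)) * (ℓ - 1 - (m + 1) + 1) = (ℓ + m) * (ℓ - m - 1) by ring,
      show (ℓ + 1 + (m + 1)) * (ℓ + 1 - (m + 1) + 1) = (ℓ + m + 2) * (ℓ - m + 1) by ring,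
      show (ℓ - (m - 1)) * (ℓ - (m - 1) - 1) = (ℓ - m + 1) * (ℓ - m) by ring,
      show (ℓ + (m - 1) + 1) * (ℓ + (m - 1) + 2) = (ℓ + m) * (ℓ + m + 1) by ring,
      show (ℓ + (m + 1)) * (ℓ + (m + 1) - 1) = (ℓ + m + 1) * (ℓ + m) by ring,
      show (ℓ - (m + 1) + 1) * (ℓ - (m + 1) + 2) = (ℓ - m) * (ℓ - m + 1) by ring,
      show ℓ ^ 2 - m ^ 2 = (ℓ - m) * (ℓ + m) by ring,
      show (ℓ + 1) ^ 2 - m ^ 2 = (ℓ - m + 1) * (ℓ + m + 1) by ring,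
      e1, e2, e3, e4, e5, e6]
    trans ((c * C ℓ * (csqrt (ℓ + m) * csqrt (ℓ - m)) *
        (-(csqrt (ℓ + m - 1) * csqrt (ℓ + m - 1)) + csqrt (ℓ - m - 1) * csqrt (ℓ - m - 1)
          + csqrt (ℓ - m + 1) * csqrt (ℓ - m + 1) - csqrt (ℓ + m + 1) * csqrt (ℓ + m + 1)
          + 4 * (m : ℂ))) • ξ (ℓ - 1) m
      + (c * C (ℓ + 1) * (csqrt (ℓ - m + 1) * csqrt (ℓ + m + 1)) *
        (-(csqrt (ℓ - m + 2) * csqrt (ℓ - m + 2)) + csqrt (ℓ + m + 2) * csqrt (ℓ + m + 2)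
          + csqrt (ℓ + m) * csqrt (ℓ + m) - csqrt (ℓ - m) * csqrt (ℓ - m)
          - 4 * (m : ℂ))) • ξ (ℓ + 1) m)
    · module
    · have hB : (c * C (ℓ + 1) * (csqrt (ℓ - m + 1) * csqrt (ℓ + m + 1)) *
          (-(csqrt (ℓ - m + 2) * csqrt (ℓ - m + 2)) + csqrt (ℓ + m + 2) * csqrt (ℓ + m + 2)
            + csqrt (ℓ + m) * csqrt (ℓ + m) - csqrt (ℓ - m) * csqrt (ℓ - m)
            - 4 * (m : ℂ))) = 0 := by
        rw [csqrt_sq (ℓ - m + 2) (by omega), csqrt_sq (ℓ + m + 2) (by omega),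
          csqrt_sq (ℓ + m) (by omega), csqrt_sq (ℓ - m) (by omega),
          show (-(((ℓ - m + 2 : ℤ) : ℂ)) + ((ℓ + m + 2 : ℤ) : ℂ) + ((ℓ + m : ℤ) : ℂ)
            - ((ℓ - m : ℤ) : ℂ) - 4 * (m : ℂ)) = 0 by push_cast; ring, mul_zero]
      have hA : (c * C ℓ * (csqrt (ℓ + m) * csqrt (ℓ - m)) *
          (-(csqrt (ℓ + m - 1) * csqrt (ℓ + m - 1)) + csqrt (ℓ - m - 1) * csqrt (ℓ - m - 1)
            + csqrt (ℓ - m + 1) * csqrt (ℓ - m + 1) - csqrt (ℓ + m + 1) * csqrt (ℓ + m + 1)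
            + 4 * (m : ℂ))) = 0 := by
        by_cases h1 : ℓ + m = 0
        · rw [h1, csqrt_zero]; ring
        · by_cases h2 : ℓ - m = 0
          · rw [h2, csqrt_zero]; ring
          · rw [csqrt_sq (ℓ + m - 1) (by omega), csqrt_sq (ℓ - m - 1) (by omega),
              csqrt_sq (ℓ - m + 1) (by omega), csqrt_sq (ℓ + m + 1) (by omega),
              show (-(((ℓ + m - 1 : ℤ) : ℂ)) + ((ℓ - m - 1 : ℤ) : ℂ) + ((ℓ - m + 1 : ℤ) : ℂ)
                - ((ℓ + m + 1 : ℤ) : ℂ) + 4 * (m : ℂ)) = 0 by push_cast; ring, mul_zero]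
      rw [hA, hB, zero_smul, zero_smul, add_zero]
  · simp [rhoHp, rhoHm, rhoFp, rhoFm, rhoF3, rhoH3, mkOp_single, h]


end
end

section
/- Let x : S → ℂ be a square-summable family (∑_{(ℓ,m)∈S}|x_{ℓ,m}|² < ∞) satisfying, coefficientwise, ρ(F₋)x = 0, i.e., for all integers ℓ ≥ 1 and m with |m| ≤ ℓ: C_{ℓ+1}·√((ℓ+m+1)(ℓ+m+2))·x_{ℓ+1,m+1} + C_ℓ·√((ℓ−m−1)(ℓ−m))·x_{ℓ−1,m+1} = 0 (with x_{ℓ',m'} := 0 for (ℓ',m') ∉ S). Then x = λ·ξ⁺ for some λ ∈ ℂ, where ξ⁺ is the family supported on {(ℓ,1) : ℓ ≥ 1} with coefficients x₁ = 1, x₂ = 0, x_{ℓ+1} = −(C_ℓ·√((ℓ−1)ℓ))/(C_{ℓ+1}·√((ℓ+1)(ℓ+2)))·x_{ℓ−1} for ℓ ≥ 2. In particular, the space of square-summable solutions of ρ(F₋)x = 0 is one-dimensional. -/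
noncomputable section

/-- The coefficients of the highest weight vector `ξ⁺`: `xp 1 = 1`, `xp 2 = 0`, and
`xp (ℓ+1) = -(C_ℓ √((ℓ-1)ℓ))/(C_{ℓ+1} √((ℓ+1)(ℓ+2))) · xp (ℓ-1)` for `ℓ ≥ 2`. -/
def xp : ℕ → ℂ
  | 0 => 0
  | 1 => 1
  | 2 => 0
  | (n + 3) =>
      -(C ((n : ℤ) + 2) * csqrt (((n : ℤ) + 1) * ((n : ℤ) + 2))) /
          (C ((n : ℤ) + 3) * csqrt (((n : ℤ) + 3) * ((n : ℤ) + 4))) * xp (n + 1)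

/-- The family `ξ⁺` supported on `{(ℓ,1) : ℓ ≥ 1}` with coefficients `xp ℓ`. -/
def xiplus : ℤ × ℤ → ℂ := fun p => if 1 ≤ p.1 ∧ p.2 = 1 then xp p.1.toNat else 0

lemma norm_csqrt (a : ℤ) : ‖csqrt a‖ = Real.sqrt (a : ℝ) := by
  simp [csqrt, Complex.norm_real, abs_of_nonneg, Real.sqrt_nonneg]

lemma csqrt_ne_zero {a : ℤ} (h : 0 < a) : csqrt a ≠ 0 := by
  simp only [csqrt, ne_eq, Complex.ofReal_eq_zero]
  exact ne_of_gt (Real.sqrt_pos.mpr (by exact_mod_cast h))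

lemma csqrt_eq_zero {a : ℤ} (h : a ≤ 0) : csqrt a = 0 := by
  simp only [csqrt, Complex.ofReal_eq_zero]
  exact Real.sqrt_eq_zero_of_nonpos (by exact_mod_cast h)

lemma norm_C (ℓ : ℤ) : ‖C ℓ‖ = Real.sqrt ((ℓ : ℝ) ^ 2 - 1) / Real.sqrt (4 * (ℓ : ℝ) ^ 2 - 1) := by
  rw [C, norm_mul, Complex.norm_I, one_mul, ← Complex.ofReal_div, Complex.norm_real]
  exact abs_of_nonneg (div_nonneg (Real.sqrt_nonneg _) (Real.sqrt_nonneg _))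

lemma C_ne_zero {ℓ : ℤ} (h : 2 ≤ ℓ) : C ℓ ≠ 0 := by
  have h1 : (0:ℝ) < (ℓ : ℝ) ^ 2 - 1 := by
    have : (2:ℝ) ≤ (ℓ:ℝ) := by exact_mod_cast h
    nlinarith
  have h2 : (0:ℝ) < 4 * (ℓ : ℝ) ^ 2 - 1 := by nlinarith
  have : ‖C ℓ‖ ≠ 0 := by
    rw [norm_C]
    positivity
  simpa using this

lemma norm_C_le_one (ℓ : ℤ) : ‖C ℓ‖ ≤ 1 := by
  rw [norm_C]
  rcases le_or_gt (4 * (ℓ:ℝ)^2 - 1) 0 with h | h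
  · rw [Real.sqrt_eq_zero_of_nonpos h]
    simp
  · rw [div_le_one (Real.sqrt_pos.mpr h)]
    exact Real.sqrt_le_sqrt (by nlinarith)

lemma norm_C_mono {ℓ : ℤ} (h : 1 ≤ ℓ) : ‖C ℓ‖ ≤ ‖C (ℓ + 1)‖ := by
  have hl : (1:ℝ) ≤ (ℓ:ℝ) := by exact_mod_cast h
  rw [norm_C, norm_C]
  push_cast
  have hb : (0:ℝ) < 4 * (ℓ:ℝ)^2 - 1 := by nlinarith
  have hb' : (0:ℝ) < 4 * ((ℓ:ℝ)+1)^2 - 1 := by nlinarith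
  have ha : (0:ℝ) ≤ (ℓ:ℝ)^2 - 1 := by nlinarith
  have ha' : (0:ℝ) ≤ ((ℓ:ℝ)+1)^2 - 1 := by nlinarith
  rw [div_le_div_iff₀ (Real.sqrt_pos.mpr hb) (Real.sqrt_pos.mpr hb')]
  rw [← Real.sqrt_mul ha, ← Real.sqrt_mul ha']
  apply Real.sqrt_le_sqrt
  nlinarith

lemma norm_eq_of_add_eq_zero {A B u v : ℂ} (h : A * u + B * v = 0) :
    ‖A‖ * ‖u‖ = ‖B‖ * ‖v‖ := by
  have h' : A * u = -(B * v) := by linear_combination h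
  calc ‖A‖ * ‖u‖ = ‖A * u‖ := (norm_mul _ _).symm
    _ = ‖B * v‖ := by rw [h', norm_neg]
    _ = ‖B‖ * ‖v‖ := norm_mul _ _

/-- Every square-summable family `x` supported on `S` satisfying `ρ(F₋)x = 0`
coefficientwise is a scalar multiple of `ξ⁺`; in particular the space of
square-summable solutions of `ρ(F₋)x = 0` is (at most) one-dimensional. -/
theorem solutions_of_Fminus_eq_zero (x : ℤ × ℤ → ℂ)
    (hsupp : ∀ p : ℤ × ℤ, ¬ inS p → x p = 0)
    (hsum : Summable (fun p : ℤ × ℤ => ‖x p‖ ^ 2))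
    (heq : ∀ ℓ m : ℤ, 1 ≤ ℓ → |m| ≤ ℓ →
      C (ℓ + 1) * csqrt ((ℓ + m + 1) * (ℓ + m + 2)) * x (ℓ + 1, m + 1)
        + C ℓ * csqrt ((ℓ - m - 1) * (ℓ - m)) * x (ℓ - 1, m + 1) = 0) :
    ∃ lam : ℂ, ∀ p : ℤ × ℤ, x p = lam * xiplus p := by
  classical
  -- Step: monotonicity of `‖C n‖ ‖x (n,m')‖` in columns `m' ≤ 0`.
  have step : ∀ m' n : ℤ, m' ≤ 0 → 1 ≤ n →
      ‖C n‖ * ‖x (n, m')‖ ≤ ‖C (n + 2)‖ * ‖x (n + 2, m')‖ := by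
    intro m' n hm hn
    rcases lt_or_ge (n + m') 0 with hc | hc
    · have hx : x (n, m') = 0 := by
        apply hsupp
        intro ⟨h1, h2⟩
        rw [abs_of_nonpos hm] at h2
        omega
      rw [hx]
      simp
      positivity
    · have h := heq (n + 1) (m' - 1) (by omega) (by rw [abs_of_nonpos (by omega)]; omega)
      rw [show n + 1 + 1 = n + 2 by ring, show m' - 1 + 1 = m' by ring,
        show n + 1 - 1 = n by ring,
        show (n + 1 + (m' - 1) + 1) * (n + 1 + (m' - 1) + 2) = (n + m' + 1) * (n + m' + 2) by ring,
        show (n + 1 - (m' - 1) - 1) * (n + 1 - (m' - 1)) = (n - m' + 1) * (n - m' + 2) by ring] at h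
      have hne := norm_eq_of_add_eq_zero h
      rw [norm_mul, norm_mul, norm_csqrt, norm_csqrt] at hne
      set s1 := Real.sqrt (((n + m' + 1) * (n + m' + 2) : ℤ) : ℝ) with hs1
      set s2 := Real.sqrt (((n - m' + 1) * (n - m' + 2) : ℤ) : ℝ) with hs2
      have hs1pos : 0 < s1 := by
        rw [hs1]
        apply Real.sqrt_pos.mpr
        have : (0:ℤ) < (n + m' + 1) * (n + m' + 2) := by positivity <;> omega
        exact_mod_cast this
      have hs12 : s1 ≤ s2 := by
        rw [hs1, hs2]
        apply Real.sqrt_le_sqrt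
        have : (n + m' + 1) * (n + m' + 2) ≤ (n - m' + 1) * (n - m' + 2) := by nlinarith
        exact_mod_cast this
      have hC : ‖C n‖ ≤ ‖C (n + 1)‖ := norm_C_mono hn
      have h0 : (0:ℝ) ≤ ‖x (n, m')‖ := norm_nonneg _
      have h1 : (0:ℝ) ≤ ‖C n‖ := norm_nonneg _
      have h2 : (0:ℝ) ≤ ‖C (n + 1)‖ := norm_nonneg _
      have key : ‖C n‖ * ‖x (n, m')‖ * s1 ≤ ‖C (n + 2)‖ * ‖x (n + 2, m')‖ * s1 := by
        nlinarith [mul_le_mul_of_nonneg_right (mul_le_mul hC hs12 hs1pos.le h2) h0]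
      exact le_of_mul_le_mul_right key hs1pos
  -- rows ≥ 2 in columns m' ≤ 0 vanish
  have zero2 : ∀ m' n : ℤ, m' ≤ 0 → 1 ≤ n → ‖C n‖ * ‖x (n, m')‖ = 0 := by
    intro m' n hm hn
    have mono : ∀ j : ℕ, ‖C n‖ * ‖x (n, m')‖ ≤ ‖C (n + 2 * j)‖ * ‖x (n + 2 * j, m')‖ := by
      intro j
      induction j with
      | zero => simp
      | succ j ih =>
          refine le_trans ih ?_
          have := step m' (n + 2 * j) hm (by omega)
          rw [show n + 2 * (j + 1 : ℕ) = n + 2 * j + 2 by push_cast; ring]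
          exact this
    have hinj : Function.Injective (fun j : ℕ => ((n + 2 * j : ℤ), m')) := by
      intro a b hab
      simp only [Prod.mk.injEq] at hab
      omega
    have hs : Summable (fun j : ℕ => ‖x (n + 2 * j, m')‖ ^ 2) := hsum.comp_injective hinj
    have ht : Filter.Tendsto (fun j : ℕ => ‖x (n + 2 * j, m')‖ ^ 2) Filter.atTop (nhds 0) :=
      hs.tendsto_atTop_zero
    have ht' : Filter.Tendsto (fun j : ℕ => ‖x (n + 2 * j, m')‖) Filter.atTop (nhds 0) := by
      have := ht.sqrt
      rw [Real.sqrt_zero] at this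
      convert this using 2 with j
      rw [Real.sqrt_sq (norm_nonneg _)]
    have hle : ∀ j : ℕ, ‖C n‖ * ‖x (n, m')‖ ≤ ‖x (n + 2 * j, m')‖ := by
      intro j
      refine le_trans (mono j) ?_
      calc ‖C (n + 2 * j)‖ * ‖x (n + 2 * j, m')‖ ≤ 1 * ‖x (n + 2 * j, m')‖ := by
            exact mul_le_mul_of_nonneg_right (norm_C_le_one _) (norm_nonneg _)
        _ = ‖x (n + 2 * j, m')‖ := one_mul _
    have := ge_of_tendsto' ht' hle
    have hnn : (0:ℝ) ≤ ‖C n‖ * ‖x (n, m')‖ := by positivity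
    linarith
  have zero2' : ∀ m' n : ℤ, m' ≤ 0 → 2 ≤ n → x (n, m') = 0 := by
    intro m' n hm hn
    have := zero2 m' n hm (by omega)
    rcases mul_eq_zero.mp this with h | h
    · exact absurd h (by simpa using C_ne_zero hn)
    · simpa using h
  -- row 1 in columns m' ≤ 0
  have zero1 : ∀ m' : ℤ, m' ≤ 0 → x (1, m') = 0 := by
    intro m' hm
    rcases le_or_gt m' (-2) with h2 | h2
    · apply hsupp
      intro ⟨_, habs⟩
      rw [abs_of_nonpos hm] at habs
      omega
    · have h := heq 2 (m' - 1) (by omega) (by rw [abs_of_nonpos (by omega)]; omega)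
      rw [show (2:ℤ) + 1 = 3 by ring, show m' - 1 + 1 = m' by ring,
        show (2:ℤ) - 1 = 1 by ring] at h
      rw [zero2' m' 3 hm (by omega)] at h
      simp only [mul_zero, zero_add] at h
      rcases mul_eq_zero.mp h with h' | h'
      · exfalso
        rcases mul_eq_zero.mp h' with h'' | h''
        · exact C_ne_zero (by omega) h''
        · exact csqrt_ne_zero (by nlinarith) h''
      · exact h'
  -- columns m' ≥ 2 vanish
  have colpos : ∀ m' : ℤ, 2 ≤ m' → ∀ k : ℕ, x (m' + k, m') = 0 := by
    intro m' hm k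
    induction k using Nat.strong_induction_on with
    | _ k ih =>
      have h := heq (m' + k - 1) (m' - 1) (by omega)
        (by rw [abs_of_nonneg (by omega)]; omega)
      rw [show m' + (k:ℤ) - 1 + 1 = m' + k by ring, show m' - 1 + 1 = m' by ring,
        show m' + (k:ℤ) - 1 - 1 = m' + k - 2 by ring,
        show (m' + (k:ℤ) - 1 + (m' - 1) + 1) * (m' + (k:ℤ) - 1 + (m' - 1) + 2)
          = (2 * m' + k - 1) * (2 * m' + k) by ring,
        show (m' + (k:ℤ) - 1 - (m' - 1) - 1) * (m' + (k:ℤ) - 1 - (m' - 1))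
          = ((k:ℤ) - 1) * k by ring] at h
      have hsecond : C (m' + k - 1) * csqrt (((k:ℤ) - 1) * k) * x (m' + k - 2, m') = 0 := by
        rcases Nat.lt_or_ge k 2 with hk | hk
        · interval_cases k
          · rw [csqrt_eq_zero (by norm_num)]; ring
          · rw [show ((1:ℕ):ℤ) - 1 = 0 by norm_num]
            rw [show (0:ℤ) * ((1:ℕ):ℤ) = 0 by ring, csqrt_eq_zero le_rfl]; ring
        · have hk2 : x (m' + k - 2, m') = 0 := by
            have := ih (k - 2) (by omega)
            rw [show m' + (k:ℤ) - 2 = m' + ((k - 2 : ℕ) : ℤ) by push_cast [hk]; ring]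
            exact this
          rw [hk2]; ring
      rw [hsecond, add_zero] at h
      rcases mul_eq_zero.mp h with h' | h'
      · exfalso
        rcases mul_eq_zero.mp h' with h'' | h''
        · exact C_ne_zero (by omega) h''
        · exact csqrt_ne_zero (by nlinarith [sq_nonneg ((k:ℤ))] ) h''
      · exact h'
  -- column m' = 1
  have col1 : ∀ k : ℕ, x (1 + k, 1) = x (1, 1) * xp (1 + k) := by
    intro k
    induction k using Nat.strong_induction_on with
    | _ k ih =>
      match k with
      | 0 => simp [xp]
      | 1 =>
        have h := heq 1 0 (by norm_num) (by norm_num)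
        rw [show (1:ℤ) + 1 = 2 by ring, show (1:ℤ) - 1 = 0 by ring, show (0:ℤ) + 1 = 1 by ring,
          show ((1:ℤ) + 0 + 1) * (1 + 0 + 2) = 6 by ring,
          show ((1:ℤ) - 0 - 1) * (1 - 0) = 0 by ring, C_one] at h
        simp only [zero_mul, add_zero] at h
        have hx2 : x (2, 1) = 0 := by
          rcases mul_eq_zero.mp h with h' | h'
          · exfalso
            rcases mul_eq_zero.mp h' with h'' | h''
            · exact C_ne_zero (by norm_num) h''
            · exact csqrt_ne_zero (by norm_num) h''
          · exact h'
        rw [show (1:ℤ) + ((1:ℕ):ℤ) = 2 by norm_num, hx2]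
        norm_num [xp]
      | (k + 2) =>
        have h := heq ((k:ℤ) + 2) 0 (by omega) (by simp; positivity)
        rw [show ((k:ℤ) + 2) + 1 = (k:ℤ) + 3 by ring, show (0:ℤ) + 1 = 1 by ring,
          show ((k:ℤ) + 2) - 1 = (k:ℤ) + 1 by ring,
          show ((k:ℤ) + 2 + 0 + 1) * ((k:ℤ) + 2 + 0 + 2) = ((k:ℤ) + 3) * ((k:ℤ) + 4) by ring,
          show ((k:ℤ) + 2 - 0 - 1) * ((k:ℤ) + 2 - 0) = ((k:ℤ) + 1) * ((k:ℤ) + 2) by ring] at h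
        have hih : x ((k:ℤ) + 1, 1) = x (1, 1) * xp (k + 1) := by
          have := ih k (by omega)
          rw [show (1:ℤ) + (k:ℤ) = (k:ℤ) + 1 by ring] at this
          rw [this, show 1 + k = k + 1 by ring]
        have hA : C ((k:ℤ) + 3) * csqrt (((k:ℤ) + 3) * ((k:ℤ) + 4)) ≠ 0 :=
          mul_ne_zero (C_ne_zero (by omega)) (csqrt_ne_zero (by positivity))
        have hsolve : x ((k:ℤ) + 3, 1) =
            -(C ((k:ℤ) + 2) * csqrt (((k:ℤ) + 1) * ((k:ℤ) + 2))) /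
              (C ((k:ℤ) + 3) * csqrt (((k:ℤ) + 3) * ((k:ℤ) + 4))) * x ((k:ℤ) + 1, 1) := by
          rw [div_mul_eq_mul_div, eq_div_iff hA]
          linear_combination h
        rw [show (1:ℤ) + ((k:ℕ) + 2 : ℕ) = (k:ℤ) + 3 by push_cast; ring, hsolve, hih,
          show 1 + (k + 2) = k + 3 by ring, xp]
        ring
  refine ⟨x (1, 1), ?_⟩
  rintro ⟨n, mm⟩
  rcases lt_trichotomy mm 1 with hmm | hmm | hmm
  · -- mm ≤ 0
    have hmm0 : mm ≤ 0 := by omega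
    have hx : x (n, mm) = 0 := by
      rcases lt_trichotomy n 1 with hn | hn | hn
      · apply hsupp; intro ⟨h1, _⟩; omega
      · rw [hn]; exact zero1 mm hmm0
      · exact zero2' mm n hmm0 (by omega)
    rw [hx, xiplus]
    simp only [show ¬(1 ≤ n ∧ mm = 1) from by rintro ⟨_, h⟩; omega, if_false, mul_zero]
  · -- mm = 1
    subst hmm
    rcases lt_or_ge n 1 with hn | hn
    · have hx : x (n, 1) = 0 := by apply hsupp; intro ⟨h1, _⟩; omega
      rw [hx, xiplus]
      rw [if_neg (by rintro ⟨h, _⟩; omega)]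
      rw [mul_zero]
    · obtain ⟨k, hk⟩ : ∃ k : ℕ, n = 1 + k := ⟨(n - 1).toNat, by omega⟩
      subst hk
      rw [col1 k, xiplus]
      rw [if_pos (show (1:ℤ) ≤ 1 + (k:ℤ) ∧ (1:ℤ) = 1 from ⟨by omega, rfl⟩)]
      have hti : ((1:ℤ) + (k:ℤ)).toNat = 1 + k := by omega
      rw [hti]
  · -- mm ≥ 2
    have hx : x (n, mm) = 0 := by
      rcases lt_or_ge n mm with hn | hn
      · apply hsupp; intro ⟨h1, h2⟩; rw [abs_of_nonneg (by omega)] at h2; omega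
      · obtain ⟨k, hk⟩ : ∃ k : ℕ, n = mm + k := ⟨(n - mm).toNat, by omega⟩
        subst hk
        exact colpos mm (by omega) k
    rw [hx, xiplus]
    simp only [show ¬(1 ≤ n ∧ mm = 1) from by rintro ⟨_, h⟩; omega, if_false, mul_zero]


end
end
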